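/- Let W_aff be the affine Weyl group of a reduced root system Σ_0, with fundamental alcove C and special vertex x = 0. For μ in the coroot lattice, the minimal-length representative length of the coset e^μ·W_0 satisfies l((e^μ)^{W_0}) = Σ_{a(C)>0} |⟨μ,a⟩| − #{a ∈ Σ_0 : a(C) > 0 and ⟨μ,a⟩ > 0}. -/

import Mathlib

/-- The length of an element `g` of the affine Weyl group, realized as a permutation of the
vector space `V`: the number of affine roots `α = a + k` which are positive on the
fundamental alcove `C` and whose transform `g(α) = α ∘ g⁻¹` is negative on `C`. -/
noncomputable def affineLength {V : Type*} [AddCommGroup V] [Module ℝ V]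
    (pos : Finset (Module.Dual ℝ V)) (C : Set V) (g : Equiv.Perm V) : ℕ :=
  Set.ncard {p : Module.Dual ℝ V × ℤ |
    (p.1 ∈ pos ∨ -p.1 ∈ pos) ∧
    (∀ x ∈ C, 0 < p.1 x + (p.2 : ℝ)) ∧
    (∀ x ∈ C, p.1 (g⁻¹ x) + (p.2 : ℝ) < 0)}


open scoped Classical

noncomputable def reflRoot {V : Type*} [AddCommGroup V] [Module ℝ V]
    (a : Module.Dual ℝ V) (v : V) (h : a v = 2) : Equiv.Perm V where
  toFun x := x - a x • v
  invFun x := x - a x • v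
  left_inv := by
    intro x
    have h1 : a (x - a x • v) = a x - a x * 2 := by
      simp [map_sub, map_smul, h, smul_eq_mul]
    show (x - a x • v) - a (x - a x • v) • v = x
    rw [h1]; module
  right_inv := by
    intro x
    have h1 : a (x - a x • v) = a x - a x * 2 := by
      simp [map_sub, map_smul, h, smul_eq_mul]
    show (x - a x • v) - a (x - a x • v) • v = x
    rw [h1]; module

@[simp] lemma reflRoot_apply {V : Type*} [AddCommGroup V] [Module ℝ V]
    (a : Module.Dual ℝ V) (v : V) (h : a v = 2) (x : V) :
    reflRoot a v h x = x - a x • v := rfl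

section Aux

variable {V : Type*} [AddCommGroup V] [Module ℝ V]

variable (pos : Finset (Module.Dual ℝ V)) (W0 : Subgroup (Equiv.Perm V))
variable (hW0perm : ∀ σ ∈ W0, ∀ b : Module.Dual ℝ V, (b ∈ pos ∨ -b ∈ pos) →
      ∃ c : Module.Dual ℝ V, (c ∈ pos ∨ -c ∈ pos) ∧ ∀ x, b (σ x) = c x)

noncomputable def rootImage (σ : Equiv.Perm V) (b : Module.Dual ℝ V) : Module.Dual ℝ V :=
  if h : σ ∈ W0 ∧ (b ∈ pos ∨ -b ∈ pos) then (hW0perm σ h.1 b h.2).choose else 0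

lemma rootImage_mem {σ : Equiv.Perm V} {b : Module.Dual ℝ V} (hσ : σ ∈ W0)
    (hb : b ∈ pos ∨ -b ∈ pos) :
    rootImage pos W0 hW0perm σ b ∈ pos ∨ -(rootImage pos W0 hW0perm σ b) ∈ pos := by
  rw [rootImage, dif_pos ⟨hσ, hb⟩]
  exact (hW0perm σ hσ b hb).choose_spec.1

lemma rootImage_eval {σ : Equiv.Perm V} {b : Module.Dual ℝ V} (hσ : σ ∈ W0)
    (hb : b ∈ pos ∨ -b ∈ pos) (x : V) :
    b (σ x) = rootImage pos W0 hW0perm σ b x := by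
  rw [rootImage, dif_pos ⟨hσ, hb⟩]
  exact (hW0perm σ hσ b hb).choose_spec.2 x

lemma rootImage_unique {σ : Equiv.Perm V} {b c : Module.Dual ℝ V} (hσ : σ ∈ W0)
    (hb : b ∈ pos ∨ -b ∈ pos) (hc : ∀ x, b (σ x) = c x) :
    c = rootImage pos W0 hW0perm σ b := by
  ext x
  rw [← hc x, rootImage_eval pos W0 hW0perm hσ hb]

lemma rootImage_neg {σ : Equiv.Perm V} {b : Module.Dual ℝ V} (hσ : σ ∈ W0)
    (hb : b ∈ pos ∨ -b ∈ pos) :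
    rootImage pos W0 hW0perm σ (-b) = -(rootImage pos W0 hW0perm σ b) := by
  have hb' : (-b) ∈ pos ∨ -(-b) ∈ pos := by
    rcases hb with h | h
    · exact Or.inr (by simpa using h)
    · exact Or.inl h
  refine (rootImage_unique pos W0 hW0perm hσ hb' ?_).symm
  intro x
  simp [rootImage_eval pos W0 hW0perm hσ hb x]

/-- The length contribution of a single pair `±a` of roots. -/
noncomputable def Tm (pos : Finset (Module.Dual ℝ V)) (μ : V) (e : Module.Dual ℝ V) : ℕ :=
  (⌊e μ⌋ + 1 - (if e ∈ pos then 1 else 0)).toNat +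
    (-⌊e μ⌋ - 1 + (if e ∈ pos then 1 else 0)).toNat

variable (C : Set V) (hC : C.Nonempty)
variable (hCpos : ∀ a ∈ pos, ∀ x ∈ C, 0 < a x ∧ a x < 1)
variable (cv : Module.Dual ℝ V → V) (hcv : ∀ a ∈ pos, a (cv a) = 2)
variable (hW0gen : W0 = Subgroup.closure
  {σ : Equiv.Perm V | ∃ a ∈ pos, ∀ x, σ x = x - a x • cv a})
variable (τ : V → Equiv.Perm V) (hτ : ∀ ν x, τ ν x = x + ν)
variable (μ : V)
variable (hμint : ∀ a : Module.Dual ℝ V, (a ∈ pos ∨ -a ∈ pos) → ∃ n : ℤ, a μ = n)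

include hC hCpos in
lemma neg_notin {b : Module.Dual ℝ V} (hb : b ∈ pos) : -b ∉ pos := by
  intro h
  obtain ⟨x₀, hx₀⟩ := hC
  have h1 := (hCpos b hb x₀ hx₀).1
  have h2 := (hCpos _ h x₀ hx₀).1
  simp only [LinearMap.neg_apply] at h2
  linarith

include hC hCpos hτ hμint in
lemma count_formula {σ : Equiv.Perm V} (hσ : σ ∈ W0) :
    affineLength pos C (τ μ * σ) =
      ∑ a ∈ pos, Tm pos μ (rootImage pos W0 hW0perm σ⁻¹ a) := by
  classical
  obtain ⟨x₀, hx₀⟩ := hC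
  have hσi : σ⁻¹ ∈ W0 := inv_mem hσ
  set R := rootImage pos W0 hW0perm σ⁻¹ with hR
  have hg : ∀ x : V, (τ μ * σ)⁻¹ x = σ⁻¹ (x - μ) := by
    intro x
    have h1 : (τ μ * σ) (σ⁻¹ (x - μ)) = x := by
      simp only [Equiv.Perm.mul_apply, Equiv.Perm.inv_def, Equiv.apply_symm_apply, hτ]
      abel
    conv_lhs => rw [← h1]
    simp
  have hfloor : ∀ b : Module.Dual ℝ V, (b ∈ pos ∨ -b ∈ pos) →
      ((⌊(R b) μ⌋ : ℤ) : ℝ) = (R b) μ := by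
    intro b hb
    obtain ⟨n, hn⟩ := hμint (R b) (rootImage_mem pos W0 hW0perm hσi hb)
    rw [hn]; simp
  set E : Finset (Module.Dual ℝ V × ℤ) :=
    (pos ∪ pos.image (fun a => -a)).biUnion
      (fun b => (Finset.Icc (if b ∈ pos then (0:ℤ) else 1)
        (⌊(R b) μ⌋ - if R b ∈ pos then 1 else 0)).image (fun k => (b, k))) with hE
  have hmemN : ∀ b : Module.Dual ℝ V,
      b ∈ pos ∪ pos.image (fun a => -a) ↔ (b ∈ pos ∨ -b ∈ pos) := by
    intro b
    simp only [Finset.mem_union, Finset.mem_image]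
    constructor
    · rintro (h | ⟨a, ha, rfl⟩)
      · exact Or.inl h
      · exact Or.inr (by simpa using ha)
    · rintro (h | h)
      · exact Or.inl h
      · exact Or.inr ⟨-b, h, by simp⟩
  have hmemE : ∀ (b : Module.Dual ℝ V) (k : ℤ), (b, k) ∈ E ↔ ((b ∈ pos ∨ -b ∈ pos) ∧
      ((if b ∈ pos then (0:ℤ) else 1) ≤ k ∧
        k ≤ ⌊(R b) μ⌋ - if R b ∈ pos then 1 else 0)) := by
    intro b k
    rw [hE]
    simp only [Finset.mem_biUnion, Finset.mem_image, Finset.mem_Icc, hmemN]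
    constructor
    · rintro ⟨b', hb', k', hk', heq⟩
      obtain ⟨h1, h2⟩ := Prod.mk.inj heq
      subst h1; subst h2
      exact ⟨hb', hk'⟩
    · rintro ⟨h1, h2⟩
      exact ⟨b, h1, k, h2, rfl⟩
  have hset : {p : Module.Dual ℝ V × ℤ |
      (p.1 ∈ pos ∨ -p.1 ∈ pos) ∧
      (∀ x ∈ C, 0 < p.1 x + (p.2 : ℝ)) ∧
      (∀ x ∈ C, p.1 ((τ μ * σ)⁻¹ x) + (p.2 : ℝ) < 0)} = ↑E := by
    ext ⟨b, k⟩
    simp only [Set.mem_setOf_eq, Finset.mem_coe, hmemE]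
    constructor
    · rintro ⟨h1, h2, h3⟩
      refine ⟨h1, ?_, ?_⟩
      · by_cases hb : b ∈ pos
        · rw [if_pos hb]
          have hb1 := hCpos b hb x₀ hx₀
          have h2' := h2 x₀ hx₀
          have hk : (-1 : ℝ) < (k : ℤ) := by push_cast; linarith [hb1.1, hb1.2]
          have : (-1 : ℤ) < k := by exact_mod_cast hk
          omega
        · rw [if_neg hb]
          have hbn : -b ∈ pos := h1.resolve_left hb
          have hb1 := hCpos _ hbn x₀ hx₀
          simp only [LinearMap.neg_apply] at hb1
          have h2' := h2 x₀ hx₀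
          have hk : (0 : ℝ) < (k : ℤ) := by push_cast; linarith [hb1.1, hb1.2]
          have : (0 : ℤ) < k := by exact_mod_cast hk
          omega
      · have hb1 : R b ∈ pos ∨ -(R b) ∈ pos := rootImage_mem pos W0 hW0perm hσi h1
        have h3' := h3 x₀ hx₀
        rw [hg, rootImage_eval pos W0 hW0perm hσi h1, map_sub] at h3'
        have hni := hfloor b h1
        by_cases hRb : R b ∈ pos
        · rw [if_pos hRb]
          have h4 := (hCpos _ hRb x₀ hx₀).1
          have h5 : ((k : ℤ) : ℝ) - ((⌊(R b) μ⌋ : ℤ) : ℝ) < 0 := by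
            rw [hni]; linarith
          have h6 : k - ⌊(R b) μ⌋ < 0 := by exact_mod_cast h5
          omega
        · rw [if_neg hRb]
          have hRbn : -(R b) ∈ pos := hb1.resolve_left hRb
          have h4 := (hCpos _ hRbn x₀ hx₀).2
          simp only [LinearMap.neg_apply] at h4
          have h5 : ((k : ℤ) : ℝ) - ((⌊(R b) μ⌋ : ℤ) : ℝ) < 1 := by
            rw [hni]; linarith
          have h6 : k - ⌊(R b) μ⌋ < 1 := by exact_mod_cast h5
          omega
    · rintro ⟨h1, h2, h3⟩
      have hb1 : R b ∈ pos ∨ -(R b) ∈ pos := rootImage_mem pos W0 hW0perm hσi h1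
      have hni := hfloor b h1
      refine ⟨h1, ?_, ?_⟩
      · intro x hx
        by_cases hb : b ∈ pos
        · rw [if_pos hb] at h2
          have hb2 := (hCpos b hb x hx).1
          have : (0 : ℝ) ≤ (k : ℝ) := by exact_mod_cast h2
          linarith
        · rw [if_neg hb] at h2
          have hbn : -b ∈ pos := h1.resolve_left hb
          have hb2 := (hCpos _ hbn x hx).2
          simp only [LinearMap.neg_apply] at hb2
          have : (1 : ℝ) ≤ (k : ℝ) := by exact_mod_cast h2
          linarith
      · intro x hx
        rw [hg, rootImage_eval pos W0 hW0perm hσi h1, map_sub]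
        by_cases hRb : R b ∈ pos
        · rw [if_pos hRb] at h3
          have h4 := (hCpos _ hRb x hx).2
          have : (k : ℝ) ≤ ((⌊(R b) μ⌋ : ℤ) : ℝ) - 1 := by
            have : ((k:ℤ) : ℝ) ≤ ((⌊(R b) μ⌋ - 1 : ℤ) : ℝ) := by exact_mod_cast (by omega : k ≤ ⌊(R b) μ⌋ - 1)
            push_cast at this ⊢
            linarith
          rw [← hni] at *
          linarith
        · rw [if_neg hRb] at h3
          have hRbn : -(R b) ∈ pos := hb1.resolve_left hRb
          have h4 := (hCpos _ hRbn x hx).1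
          simp only [LinearMap.neg_apply] at h4
          have : (k : ℝ) ≤ ((⌊(R b) μ⌋ : ℤ) : ℝ) := by
            exact_mod_cast (by omega : k ≤ ⌊(R b) μ⌋)
          rw [hni] at this
          linarith
  rw [affineLength, hset, Set.ncard_coe_finset]
  have hcard : E.card = ∑ b ∈ pos ∪ pos.image (fun a => -a),
      ((⌊(R b) μ⌋ - (if R b ∈ pos then 1 else 0)) + 1 - (if b ∈ pos then (0:ℤ) else 1)).toNat := by
    rw [hE, Finset.card_biUnion]
    · refine Finset.sum_congr rfl ?_
      intro b _
      rw [Finset.card_image_of_injective _ (fun k k' h => (Prod.mk.inj h).2), Int.card_Icc]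
    · intro b hb b' hb' hne
      simp only [Finset.disjoint_left, Finset.mem_image]
      rintro p ⟨kk, hkk, rfl⟩ ⟨kk', hkk', heq⟩
      exact hne (Prod.mk.inj heq).1.symm
  rw [hcard, Finset.sum_union, Finset.sum_image (fun a _ a' _ h => neg_injective h),
    ← Finset.sum_add_distrib]
  · refine Finset.sum_congr rfl ?_
    intro a ha
    have hna : -a ∉ pos := neg_notin pos C ⟨x₀, hx₀⟩ hCpos ha
    have hmema : (a ∈ pos ∨ -a ∈ pos) := Or.inl ha
    have hRa_mem := rootImage_mem pos W0 hW0perm hσi hmema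
    have hRneg : R (-a) = -(R a) := rootImage_neg pos W0 hW0perm hσi hmema
    have hfl : ⌊(R (-a)) μ⌋ = -⌊(R a) μ⌋ := by
      rw [hRneg]
      have h1 := hfloor a hmema
      have : (-(R a)) μ = -(((⌊(R a) μ⌋ : ℤ)) : ℝ) := by
        rw [h1]; simp
      rw [this, ← Int.cast_neg, Int.floor_intCast]
    have hif : (if R (-a) ∈ pos then (1:ℤ) else 0) = 1 - (if R a ∈ pos then 1 else 0) := by
      rw [hRneg]
      by_cases h : R a ∈ pos
      · rw [if_pos h, if_neg (neg_notin pos C ⟨x₀, hx₀⟩ hCpos h)]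
        norm_num
      · rw [if_pos (hRa_mem.resolve_left h), if_neg h]
        norm_num
    rw [if_pos ha, if_neg hna, hfl, hif, Tm]
    omega
  · rw [Finset.disjoint_left]
    intro b hb hmem
    obtain ⟨a', ha', h⟩ := Finset.mem_image.mp hmem
    subst h
    exact neg_notin pos C ⟨x₀, hx₀⟩ hCpos ha' (by simpa using hb)

noncomputable def posRep (pos : Finset (Module.Dual ℝ V)) (b : Module.Dual ℝ V) :
    Module.Dual ℝ V :=
  if b ∈ pos then b else -b

lemma posRep_mem {b : Module.Dual ℝ V} (hb : b ∈ pos ∨ -b ∈ pos) : posRep pos b ∈ pos := by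
  rw [posRep]; split
  · assumption
  · exact hb.resolve_left (by assumption)

lemma posRep_pos {b : Module.Dual ℝ V} (h : b ∈ pos) : posRep pos b = b := by
  rw [posRep, if_pos h]

lemma posRep_neg {b : Module.Dual ℝ V} (h : b ∉ pos) : posRep pos b = -b := by
  rw [posRep, if_neg h]

lemma rootImage_inv_cancel {σ : Equiv.Perm V} (hσ : σ ∈ W0) {b : Module.Dual ℝ V}
    (hb : b ∈ pos ∨ -b ∈ pos) :
    rootImage pos W0 hW0perm σ (rootImage pos W0 hW0perm σ⁻¹ b) = b := by
  have hσi : σ⁻¹ ∈ W0 := inv_mem hσ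
  have hmem := rootImage_mem pos W0 hW0perm hσi hb
  refine (rootImage_unique pos W0 hW0perm hσ hmem ?_).symm
  intro x
  have h1 := rootImage_eval pos W0 hW0perm hσi hb (σ x)
  simpa using h1.symm

lemma rootImage_inv_cancel' {σ : Equiv.Perm V} (hσ : σ ∈ W0) {b : Module.Dual ℝ V}
    (hb : b ∈ pos ∨ -b ∈ pos) :
    rootImage pos W0 hW0perm σ⁻¹ (rootImage pos W0 hW0perm σ b) = b := by
  have := rootImage_inv_cancel pos W0 hW0perm (inv_mem hσ) hb
  rwa [inv_inv] at this

include hC hCpos in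
lemma sum_reindex {σ : Equiv.Perm V} (hσ : σ ∈ W0) (F : Module.Dual ℝ V → ℕ) :
    ∑ d ∈ pos, F d = ∑ a ∈ pos, F (posRep pos (rootImage pos W0 hW0perm σ⁻¹ a)) := by
  have hσi : σ⁻¹ ∈ W0 := inv_mem hσ
  refine (Finset.sum_nbij'
    (i := fun a => posRep pos (rootImage pos W0 hW0perm σ⁻¹ a))
    (j := fun d => posRep pos (rootImage pos W0 hW0perm σ d)) ?_ ?_ ?_ ?_ ?_).symm
  · intro a ha
    exact posRep_mem pos (rootImage_mem pos W0 hW0perm hσi (Or.inl ha))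
  · intro d hd
    exact posRep_mem pos (rootImage_mem pos W0 hW0perm hσ (Or.inl hd))
  · intro a ha
    have hmem := rootImage_mem pos W0 hW0perm hσi (Or.inl ha)
    by_cases h : rootImage pos W0 hW0perm σ⁻¹ a ∈ pos
    · rw [posRep_pos pos h, rootImage_inv_cancel pos W0 hW0perm hσ (Or.inl ha),
        posRep_pos pos ha]
    · rw [posRep_neg pos h,
        rootImage_neg pos W0 hW0perm hσ hmem,
        rootImage_inv_cancel pos W0 hW0perm hσ (Or.inl ha),
        posRep_neg pos (neg_notin pos C hC hCpos ha), neg_neg]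
  · intro d hd
    have hmem := rootImage_mem pos W0 hW0perm hσ (Or.inl hd)
    by_cases h : rootImage pos W0 hW0perm σ d ∈ pos
    · rw [posRep_pos pos h, rootImage_inv_cancel' pos W0 hW0perm hσ (Or.inl hd),
        posRep_pos pos hd]
    · rw [posRep_neg pos h,
        rootImage_neg pos W0 hW0perm hσi hmem,
        rootImage_inv_cancel' pos W0 hW0perm hσ (Or.inl hd),
        posRep_neg pos (neg_notin pos C hC hCpos hd), neg_neg]
  · intro a ha
    rfl

/-- The ideal per-root contribution `|⟨μ,d⟩| - [⟨μ,d⟩ > 0]`. -/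
noncomputable def betaLow (μ : V) (d : Module.Dual ℝ V) : ℕ :=
  (if 0 < ⌊d μ⌋ then ⌊d μ⌋ - 1 else -⌊d μ⌋).toNat

lemma floor_neg_dual {e : Module.Dual ℝ V} {μ : V} (hfe : ((⌊e μ⌋ : ℤ) : ℝ) = e μ) :
    ⌊(-e) μ⌋ = -⌊e μ⌋ := by
  have h1 : (-e) μ = ((-⌊e μ⌋ : ℤ) : ℝ) := by
    push_cast; rw [hfe]; simp
  rw [h1, Int.floor_intCast]

lemma term_bound {e : Module.Dual ℝ V} (hfe : ((⌊e μ⌋ : ℤ) : ℝ) = e μ) :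
    betaLow μ (posRep pos e) ≤ Tm pos μ e := by
  rw [betaLow, Tm, posRep]
  by_cases h : e ∈ pos
  · simp only [if_pos h]
    split_ifs <;> omega
  · simp only [if_neg h, floor_neg_dual hfe]
    split_ifs <;> omega

include hCpos in
lemma term_attain {e : Module.Dual ℝ V} (he : e ∈ pos ∨ -e ∈ pos)
    (hfe : ((⌊e μ⌋ : ℤ) : ℝ) = e μ) {x₀ : V} (hx₀ : x₀ ∈ C)
    (hsign : 0 < e (x₀ - μ)) :
    betaLow μ (posRep pos e) = Tm pos μ e := by
  rw [map_sub] at hsign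
  rw [betaLow, Tm, posRep]
  by_cases h : e ∈ pos
  · have h1 := (hCpos e h x₀ hx₀).2
    have h2 : ((⌊e μ⌋ : ℤ) : ℝ) < 1 := by rw [hfe]; linarith
    have h3 : ⌊e μ⌋ < 1 := by exact_mod_cast h2
    simp only [if_pos h]
    split_ifs <;> omega
  · have hne : -e ∈ pos := he.resolve_left h
    have h1 := (hCpos _ hne x₀ hx₀).1
    rw [LinearMap.neg_apply] at h1
    have h2 : ((⌊e μ⌋ : ℤ) : ℝ) < 0 := by rw [hfe]; linarith
    have h3 : ⌊e μ⌋ < 0 := by exact_mod_cast h2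
    simp only [if_neg h, floor_neg_dual hfe]
    split_ifs <;> omega


lemma max_sub_max_neg (t : ℝ) : max t 0 = max (-t) 0 + t := by
  rcases le_total 0 t with h | h
  · rw [max_eq_left h, max_eq_right (by linarith)]; ring
  · rw [max_eq_right h, max_eq_left (by linarith)]; ring

include hC hCpos hcv hW0gen hW0perm in
lemma descent (q : V) (hreg : ∀ e : Module.Dual ℝ V, (e ∈ pos ∨ -e ∈ pos) → e q ≠ 0) :
    ∃ w ∈ W0, ∀ a ∈ pos, 0 < a (w q) := by
  classical
  obtain ⟨x₀, hx₀⟩ := hC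
  set f : Equiv.Perm V → ℝ := fun w => ∑ d ∈ pos, max (-(d (w q))) 0 with hf
  have hrefl : ∀ a (ha : a ∈ pos), reflRoot a (cv a) (hcv a ha) ∈ W0 := by
    intro a ha
    rw [hW0gen]
    exact Subgroup.subset_closure ⟨a, ha, fun x => rfl⟩
  -- the key step estimate
  have hstep : ∀ (a : Module.Dual ℝ V) (ha : a ∈ pos) (w : Equiv.Perm V), w ∈ W0 →
      ∃ K : ℝ, 0 < K ∧ f (reflRoot a (cv a) (hcv a ha) * w) = f w + K * a (w q) := by
    intro a ha w hw
    set s := reflRoot a (cv a) (hcv a ha) with hs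
    have hsW : s ∈ W0 := hrefl a ha
    set φ : Module.Dual ℝ V → Module.Dual ℝ V := fun d => d - (d (cv a)) • a with hφ
    have hφeval : ∀ (d : Module.Dual ℝ V) (y : V), d (s y) = (φ d) y := by
      intro d y
      simp only [hs, reflRoot_apply, hφ, map_sub, map_smul, smul_eq_mul,
        LinearMap.sub_apply, LinearMap.smul_apply]
      ring
    have hφmem : ∀ d : Module.Dual ℝ V, (d ∈ pos ∨ -d ∈ pos) →
        (φ d ∈ pos ∨ -(φ d) ∈ pos) := by
      intro d hd
      have heq : φ d = rootImage pos W0 hW0perm s d :=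
        rootImage_unique pos W0 hW0perm hsW hd (fun x => hφeval d x)
      rw [heq]
      exact rootImage_mem pos W0 hW0perm hsW hd
    have hφcv : ∀ d : Module.Dual ℝ V, (φ d) (cv a) = -(d (cv a)) := by
      intro d
      simp only [hφ, LinearMap.sub_apply, LinearMap.smul_apply, smul_eq_mul, hcv a ha]
      ring
    have hφφ : ∀ d : Module.Dual ℝ V, φ (φ d) = d := by
      intro d
      ext x
      have h1 : (φ (φ d)) x = (φ d) x - ((φ d) (cv a)) * a x := by
        simp only [hφ, LinearMap.sub_apply, LinearMap.smul_apply, smul_eq_mul]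
      rw [h1, hφcv d]
      simp only [hφ, LinearMap.sub_apply, LinearMap.smul_apply, smul_eq_mul]
      ring
    have hφneg : ∀ d : Module.Dual ℝ V, φ (-d) = -(φ d) := by
      intro d
      ext x
      simp only [hφ, LinearMap.sub_apply, LinearMap.smul_apply, LinearMap.neg_apply,
        map_neg, smul_eq_mul]
      ring
    set T : Finset (Module.Dual ℝ V) := pos.filter (fun d => φ d ∉ pos) with hT
    -- membership facts for T
    have hTmem : ∀ d ∈ T, -(φ d) ∈ pos := by
      intro d hd
      rw [hT, Finset.mem_filter] at hd
      exact (hφmem d (Or.inl hd.1)).resolve_left hd.2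
    have hTcv : ∀ d ∈ T, 0 < d (cv a) := by
      intro d hd
      have h1 := (hCpos _ (hTmem d hd) x₀ hx₀).1
      have h2 := (hCpos d (Finset.mem_filter.mp hd).1 x₀ hx₀).1
      have h3 := (hCpos a ha x₀ hx₀)
      have h4 : -(φ d) x₀ = d (cv a) * a x₀ - d x₀ := by
        simp only [hφ, LinearMap.sub_apply, LinearMap.smul_apply, smul_eq_mul]
        ring
      rw [LinearMap.neg_apply] at h1
      rw [h4] at h1
      nlinarith [h3.1, h3.2]
    have haT : a ∈ T := by
      rw [hT, Finset.mem_filter]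
      refine ⟨ha, ?_⟩
      have : φ a = -a := by
        ext x
        simp only [hφ, LinearMap.sub_apply, LinearMap.smul_apply, smul_eq_mul, hcv a ha,
          LinearMap.neg_apply]
        ring
      rw [this]
      exact neg_notin pos C ⟨x₀, hx₀⟩ hCpos ha
    -- ψ : T → T involution
    have hψmemT : ∀ d ∈ T, -(φ d) ∈ T := by
      intro d hd
      rw [hT, Finset.mem_filter]
      refine ⟨hTmem d hd, ?_⟩
      rw [hφneg, hφφ]
      have hd1 := (Finset.mem_filter.mp hd).1
      simpa using neg_notin pos C ⟨x₀, hx₀⟩ hCpos hd1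
    have hψψ : ∀ d : Module.Dual ℝ V, -(φ (-(φ d))) = d := by
      intro d
      rw [hφneg, hφφ, neg_neg]
    -- rewrite f (s * w)
    have h1 : f (s * w) = ∑ d ∈ pos, max (-((φ d) (w q))) 0 := by
      rw [hf]
      refine Finset.sum_congr rfl ?_
      intro d _
      rw [Equiv.Perm.mul_apply, hφeval]
    -- split into S and T parts
    have hsplit : ∀ g : Module.Dual ℝ V → ℝ,
        ∑ d ∈ pos, g d = ∑ d ∈ pos.filter (fun d => φ d ∈ pos), g d + ∑ d ∈ T, g d := by
      intro g
      rw [hT]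
      exact (Finset.sum_filter_add_sum_filter_not pos _ g).symm
    -- S part is invariant
    have hSpart : ∑ d ∈ pos.filter (fun d => φ d ∈ pos), max (-((φ d) (w q))) 0
        = ∑ d ∈ pos.filter (fun d => φ d ∈ pos), max (-(d (w q))) 0 := by
      refine Finset.sum_nbij' (i := φ) (j := φ) ?_ ?_ ?_ ?_ ?_
      · intro d hd
        rw [Finset.mem_filter] at hd ⊢
        exact ⟨hd.2, by rw [hφφ]; exact hd.1⟩
      · intro d hd
        rw [Finset.mem_filter] at hd ⊢
        exact ⟨hd.2, by rw [hφφ]; exact hd.1⟩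
      · intro d _; exact hφφ d
      · intro d _; exact hφφ d
      · intro d _; rfl
    -- T part flips
    have hTpart : ∑ d ∈ T, max (-((φ d) (w q))) 0 = ∑ d ∈ T, max (d (w q)) 0 := by
      refine Finset.sum_nbij' (i := fun d => -(φ d)) (j := fun d => -(φ d)) ?_ ?_ ?_ ?_ ?_
      · intro d hd; exact hψmemT d hd
      · intro d hd; exact hψmemT d hd
      · intro d _; exact hψψ d
      · intro d _; exact hψψ d
      · intro d _
        simp only [LinearMap.neg_apply]
    -- the T-sum of values
    have hTsum : ∑ d ∈ T, d (w q) = (∑ d ∈ T, d (cv a)) / 2 * a (w q) := by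
      have e1 : ∑ d ∈ T, d (w q) = ∑ d ∈ T, (-(φ d)) (w q) := by
        refine Finset.sum_nbij' (i := fun d => -(φ d)) (j := fun d => -(φ d)) ?_ ?_ ?_ ?_ ?_
        · intro d hd; exact hψmemT d hd
        · intro d hd; exact hψmemT d hd
        · intro d _; exact hψψ d
        · intro d _; exact hψψ d
        · intro d _
          rw [hψψ d]
      have e2 : ∀ d ∈ T, d (w q) + (-(φ d)) (w q) = d (cv a) * a (w q) := by
        intro d _
        simp only [hφ, LinearMap.neg_apply, LinearMap.sub_apply, LinearMap.smul_apply,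
          smul_eq_mul]
        ring
      have e3 : (2:ℝ) * ∑ d ∈ T, d (w q) = (∑ d ∈ T, d (cv a)) * a (w q) := by
        calc (2:ℝ) * ∑ d ∈ T, d (w q)
            = ∑ d ∈ T, d (w q) + ∑ d ∈ T, (-(φ d)) (w q) := by rw [← e1]; ring
          _ = ∑ d ∈ T, (d (w q) + (-(φ d)) (w q)) := by rw [Finset.sum_add_distrib]
          _ = ∑ d ∈ T, d (cv a) * a (w q) := Finset.sum_congr rfl e2
          _ = (∑ d ∈ T, d (cv a)) * a (w q) := by rw [Finset.sum_mul]
      linarith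
    refine ⟨(∑ d ∈ T, d (cv a)) / 2, ?_, ?_⟩
    · have : 0 < ∑ d ∈ T, d (cv a) := Finset.sum_pos hTcv ⟨a, haT⟩
      linarith
    · calc f (s * w) = ∑ d ∈ pos, max (-((φ d) (w q))) 0 := h1
        _ = ∑ d ∈ pos.filter (fun d => φ d ∈ pos), max (-((φ d) (w q))) 0
            + ∑ d ∈ T, max (-((φ d) (w q))) 0 := hsplit _
        _ = ∑ d ∈ pos.filter (fun d => φ d ∈ pos), max (-(d (w q))) 0
            + ∑ d ∈ T, max (d (w q)) 0 := by rw [hSpart, hTpart]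
        _ = ∑ d ∈ pos.filter (fun d => φ d ∈ pos), max (-(d (w q))) 0
            + (∑ d ∈ T, max (-(d (w q))) 0 + ∑ d ∈ T, d (w q)) := by
              rw [← Finset.sum_add_distrib]
              congr 1
              exact Finset.sum_congr rfl (fun d _ => max_sub_max_neg _)
        _ = f w + ∑ d ∈ T, d (w q) := by
              rw [show f w = ∑ d ∈ pos.filter (fun d => φ d ∈ pos), max (-(d (w q))) 0
                + ∑ d ∈ T, max (-(d (w q))) 0 from hsplit _]
              ring
        _ = f w + (∑ d ∈ T, d (cv a)) / 2 * a (w q) := by rw [hTsum]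
  -- minimize f over W0
  have hfin : (f '' (W0 : Set (Equiv.Perm V))).Finite := by
    have hsub : f '' (W0 : Set (Equiv.Perm V)) ⊆ Set.range
        (fun g : ({d : Module.Dual ℝ V // d ∈ pos} →
            {e : Module.Dual ℝ V // e ∈ pos ∪ pos.image (fun a => -a)}) =>
          ∑ d ∈ pos.attach, max (-(((g d : Module.Dual ℝ V)) q)) 0) := by
      rintro r ⟨w, hw, rfl⟩
      refine ⟨fun d => ⟨rootImage pos W0 hW0perm w d, ?_⟩, ?_⟩
      · have := rootImage_mem pos W0 hW0perm hw (Or.inl d.2)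
        rw [Finset.mem_union]
        rcases this with h | h
        · exact Or.inl h
        · exact Or.inr (Finset.mem_image.mpr ⟨-(rootImage pos W0 hW0perm w d), h, by simp⟩)
      · dsimp only
        rw [show f w = ∑ d ∈ pos, max (-(d (w q))) 0 from rfl,
          ← Finset.sum_attach pos (fun d => max (-(d (w q))) 0)]
        refine (Finset.sum_congr rfl ?_).symm
        intro d _
        rw [rootImage_eval pos W0 hW0perm hw (Or.inl d.2)]
    exact (Set.finite_range _).subset hsub
  have hne : (f '' (W0 : Set (Equiv.Perm V))).Nonempty := ⟨f 1, ⟨1, W0.one_mem, rfl⟩⟩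
  have hne' : hfin.toFinset.Nonempty := by
    rwa [Set.Finite.toFinset_nonempty]
  obtain ⟨w, hw, hfw⟩ : ∃ w ∈ W0, f w = hfin.toFinset.min' hne' := by
    have := hfin.toFinset.min'_mem hne'
    rw [Set.Finite.mem_toFinset] at this
    obtain ⟨w, hw, hfw⟩ := this
    exact ⟨w, hw, hfw⟩
  have hmin : ∀ u : Equiv.Perm V, u ∈ W0 → f w ≤ f u := by
    intro u hu
    rw [hfw]
    exact hfin.toFinset.min'_le _ (by rw [Set.Finite.mem_toFinset]; exact ⟨u, hu, rfl⟩)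
  refine ⟨w, hw, ?_⟩
  intro a ha
  obtain ⟨K, hK, hKeq⟩ := hstep a ha w hw
  have h1 : f w ≤ f (reflRoot a (cv a) (hcv a ha) * w) :=
    hmin _ (mul_mem (hrefl a ha) hw)
  rw [hKeq] at h1
  have h2 : 0 ≤ a (w q) := by nlinarith
  have h3 : a (w q) ≠ 0 := by
    rw [rootImage_eval pos W0 hW0perm hw (Or.inl ha)]
    exact hreg _ (rootImage_mem pos W0 hW0perm hw (Or.inl ha))
  exact lt_of_le_of_ne h2 (Ne.symm h3)

end Aux

open scoped Classical in
/-- Let `W_aff` be the affine Weyl group of a reduced root system `Σ₀`,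
with fundamental alcove `C` and special vertex `x = 0`.  For `μ` in the coroot lattice,
the length of the minimal-length representative of the coset `e^μ · W₀` satisfies
`l((e^μ)^{W₀}) = Σ_{a(C)>0} |⟨μ,a⟩| − #{a ∈ Σ₀ : a(C) > 0 and ⟨μ,a⟩ > 0}`.
Here `W₀` (the finite Weyl group, the stabilizer of the special vertex `0`) is the group
generated by the reflections `s_a : x ↦ x − a(x) • a^∨` in the positive roots `a`, and the
length of the minimal-length coset representative is the infimum of the lengths over the
coset `{e^μ · v : v ∈ W₀}`. -/
theorem length_min_coset_rep_special_vertex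
    {V : Type*} [AddCommGroup V] [Module ℝ V]
    (pos : Finset (Module.Dual ℝ V)) (C : Set V)
    (hC : C.Nonempty)
    (hCpos : ∀ a ∈ pos, ∀ x ∈ C, 0 < a x ∧ a x < 1)
    (cv : Module.Dual ℝ V → V)
    (hcv : ∀ a ∈ pos, a (cv a) = 2)
    (hcry : ∀ a ∈ pos, ∀ b : Module.Dual ℝ V, (b ∈ pos ∨ -b ∈ pos) → ∃ n : ℤ, b (cv a) = n)
    (W0 : Subgroup (Equiv.Perm V))
    (hW0gen : W0 = Subgroup.closure
      {σ : Equiv.Perm V | ∃ a ∈ pos, ∀ x, σ x = x - a x • cv a})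
    (hW0perm : ∀ σ ∈ W0, ∀ b : Module.Dual ℝ V, (b ∈ pos ∨ -b ∈ pos) →
      ∃ c : Module.Dual ℝ V, (c ∈ pos ∨ -c ∈ pos) ∧ ∀ x, b (σ x) = c x)
    (τ : V → Equiv.Perm V) (hτ : ∀ ν x, τ ν x = x + ν)
    (μ : V)
    (hμint : ∀ a : Module.Dual ℝ V, (a ∈ pos ∨ -a ∈ pos) → ∃ n : ℤ, a μ = n) :
    ((sInf ((fun σ : Equiv.Perm V => affineLength pos C (τ μ * σ)) ''
        (W0 : Set (Equiv.Perm V))) : ℕ) : ℝ) =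
      (∑ a ∈ pos, |a μ|) - ((pos.filter (fun a => 0 < a μ)).card : ℝ) := by
  classical
  obtain ⟨x₀, hx₀⟩ := hC
  have hCne : C.Nonempty := ⟨x₀, hx₀⟩
  have hfl : ∀ e : Module.Dual ℝ V, (e ∈ pos ∨ -e ∈ pos) → ((⌊e μ⌋ : ℤ) : ℝ) = e μ := by
    intro e he
    obtain ⟨n, hn⟩ := hμint e he
    rw [hn]; simp
  set B : ℕ := ∑ d ∈ pos, betaLow μ d with hB
  -- lower bound
  have hlb : ∀ n ∈ (fun σ : Equiv.Perm V => affineLength pos C (τ μ * σ)) ''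
      (W0 : Set (Equiv.Perm V)), B ≤ n := by
    rintro n ⟨σ, hσ, rfl⟩
    show B ≤ affineLength pos C (τ μ * σ)
    calc B = ∑ a ∈ pos, betaLow μ (posRep pos (rootImage pos W0 hW0perm σ⁻¹ a)) :=
        sum_reindex pos W0 hW0perm C hCne hCpos hσ (betaLow μ)
      _ ≤ ∑ a ∈ pos, Tm pos μ (rootImage pos W0 hW0perm σ⁻¹ a) := by
          refine Finset.sum_le_sum ?_
          intro a ha
          exact term_bound pos μ
            (hfl _ (rootImage_mem pos W0 hW0perm (inv_mem hσ) (Or.inl ha)))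
      _ = affineLength pos C (τ μ * σ) :=
          (count_formula pos W0 hW0perm C hCne hCpos τ hτ μ hμint hσ).symm
  -- regularity of q = x₀ - μ
  have hreg : ∀ e : Module.Dual ℝ V, (e ∈ pos ∨ -e ∈ pos) → e (x₀ - μ) ≠ 0 := by
    have hpos : ∀ e ∈ pos, e (x₀ - μ) ≠ 0 := by
      intro e he
      obtain ⟨n, hn⟩ := hμint e (Or.inl he)
      have h1 := hCpos e he x₀ hx₀
      rw [map_sub, hn]
      intro hcon
      have h0 : e x₀ = (n : ℝ) := by linarith
      have h2 : (0:ℝ) < (n:ℤ) := by push_cast; rw [← h0]; exact h1.1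
      have h3 : ((n:ℤ):ℝ) < 1 := by push_cast; rw [← h0]; exact h1.2
      have h4 : (0:ℤ) < n := by exact_mod_cast h2
      have h5 : (n:ℤ) < 1 := by exact_mod_cast h3
      omega
    intro e he
    rcases he with he | he
    · exact hpos e he
    · intro hcon
      exact hpos _ he (by rw [LinearMap.neg_apply, hcon, neg_zero])
  obtain ⟨w, hw, hwpos⟩ :=
    descent pos W0 hW0perm C hCne hCpos cv hcv hW0gen (x₀ - μ) hreg
  -- attainment
  have hmem : B ∈ (fun σ : Equiv.Perm V => affineLength pos C (τ μ * σ)) ''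
      (W0 : Set (Equiv.Perm V)) := by
    refine ⟨w⁻¹, inv_mem hw, ?_⟩
    show affineLength pos C (τ μ * w⁻¹) = B
    rw [count_formula pos W0 hW0perm C hCne hCpos τ hτ μ hμint (inv_mem hw), inv_inv,
      hB, sum_reindex pos W0 hW0perm C hCne hCpos (σ := w⁻¹) (inv_mem hw) (betaLow μ), inv_inv]
    refine Finset.sum_congr rfl ?_
    intro a ha
    refine (term_attain pos C hCpos μ (rootImage_mem pos W0 hW0perm hw (Or.inl ha))
      (hfl _ (rootImage_mem pos W0 hW0perm hw (Or.inl ha))) hx₀ ?_).symm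
    rw [← rootImage_eval pos W0 hW0perm hw (Or.inl ha)]
    exact hwpos a ha
  have hkey : sInf ((fun σ : Equiv.Perm V => affineLength pos C (τ μ * σ)) ''
      (W0 : Set (Equiv.Perm V))) = B :=
    le_antisymm (Nat.sInf_le hmem) (le_csInf ⟨B, hmem⟩ hlb)
  rw [hkey]
  -- cast computation
  have hcast : ∀ d ∈ pos, ((betaLow μ d : ℕ) : ℝ) = |d μ| - (if 0 < d μ then 1 else 0) := by
    intro d hd
    have hfd := hfl d (Or.inl hd)
    rw [betaLow]
    by_cases h : 0 < ⌊d μ⌋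
    · have h0 : (0:ℝ) < d μ := by rw [← hfd]; exact_mod_cast h
      rw [if_pos h, if_pos h0]
      have e0 : ((⌊d μ⌋ - 1 : ℤ).toNat : ℤ) = ⌊d μ⌋ - 1 := Int.toNat_of_nonneg (by omega)
      have e1 : (((⌊d μ⌋ - 1 : ℤ).toNat : ℕ) : ℝ) = ((⌊d μ⌋ - 1 : ℤ) : ℝ) := by
        exact_mod_cast congrArg (fun z : ℤ => (z : ℝ)) e0
      rw [e1]
      push_cast
      rw [hfd, abs_of_pos h0]
    · have h0 : ¬ (0:ℝ) < d μ := by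
        rw [← hfd]
        intro hc
        exact h (by exact_mod_cast hc)
      rw [if_neg h, if_neg h0]
      have e0 : ((-⌊d μ⌋ : ℤ).toNat : ℤ) = -⌊d μ⌋ := Int.toNat_of_nonneg (by omega)
      have e1 : (((-⌊d μ⌋ : ℤ).toNat : ℕ) : ℝ) = ((-⌊d μ⌋ : ℤ) : ℝ) := by
        exact_mod_cast congrArg (fun z : ℤ => (z : ℝ)) e0
      rw [e1]
      push_cast
      rw [hfd, abs_of_nonpos (le_of_not_gt h0)]
      ring
  calc ((B : ℕ) : ℝ) = ∑ d ∈ pos, ((betaLow μ d : ℕ) : ℝ) := by rw [hB]; push_cast; rfl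
    _ = ∑ d ∈ pos, (|d μ| - if 0 < d μ then 1 else 0) := Finset.sum_congr rfl hcast
    _ = (∑ a ∈ pos, |a μ|) - ∑ a ∈ pos, (if 0 < a μ then (1:ℝ) else 0) :=
        Finset.sum_sub_distrib _ _
    _ = (∑ a ∈ pos, |a μ|) - ((pos.filter (fun a => 0 < a μ)).card : ℝ) := by
        rw [Finset.sum_boole]
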